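/- Define η : 𝔹₂ × ℂ² → ℝ≥0 by η(z;X) := ‖X‖ for z ≠ 0 and η(0;X) := max{‖X‖, |X₁|/ε} for 0 < ε < 1/√2, where 𝔹₂ ⊂ ℂ² is the unit Euclidean ball. Then η is an upper semicontinuous metric, 𝕎η(z;X) = √2·‖X‖ for z ≠ 0, and 𝕎η(0;(0,1)) < √2; consequently the Wu pseudometric 𝕎η is NOT upper semicontinuous at (0,(0,1)). -/

import Mathlib

noncomputable section

open Classical MeasureTheory Complex
open scoped ComplexConjugate

abbrev Cn (n : ℕ) := EuclideanSpace ℂ (Fin n)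

instance {n : ℕ} : InnerProductSpace ℝ (Cn n) := InnerProductSpace.rclikeToReal ℂ _
instance {n : ℕ} : MeasurableSpace (Cn n) := borel _
instance {n : ℕ} : BorelSpace (Cn n) := ⟨rfl⟩

/-- A ℂ-seminorm on ℂⁿ. -/
structure IsCSeminorm {n : ℕ} (h : Cn n → ℝ) : Prop where
  nonneg : ∀ X, 0 ≤ h X
  add_le : ∀ X Y, h (X + Y) ≤ h X + h Y
  smul : ∀ (t : ℂ) (X : Cn n), h (t • X) = ‖t‖ * h X

/-- A ℂ-norm on ℂⁿ. -/
def IsCNorm {n : ℕ} (h : Cn n → ℝ) : Prop :=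
  IsCSeminorm h ∧ ∀ X, h X = 0 → X = 0

/-- A positive semidefinite Hermitian sesquilinear form on ℂⁿ,
linear in the first variable (convention ⟨z,w⟩ = Σ zⱼ conj wⱼ). -/
structure HermForm (n : ℕ) where
  s : Cn n → Cn n → ℂ
  add_left : ∀ X Y Z, s (X + Y) Z = s X Z + s Y Z
  smul_left : ∀ (t : ℂ) (X Y : Cn n), s (t • X) Y = t * s X Y
  conj_symm : ∀ X Y, s Y X = conj (s X Y)
  nonneg : ∀ X, 0 ≤ (s X X).re

/-- Positive definiteness. -/
def HermForm.PosDef {n : ℕ} (s : HermForm n) : Prop := ∀ X, X ≠ 0 → 0 < (s.s X X).re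

/-- q_s(X) = √ s(X,X). -/
def HermForm.q {n : ℕ} (s : HermForm n) (X : Cn n) : ℝ := Real.sqrt (s.s X X).re

/-- The open unit ball E(s). -/
def HermForm.ball {n : ℕ} (s : HermForm n) : Set (Cn n) := {X | (s.s X X).re < 1}

/-- `s` is a minimal-volume positive definite Hermitian product with q_s ≤ h,
i.e. `s = s^h`. -/
def IsMinimalProd {n : ℕ} (h : Cn n → ℝ) (s : HermForm n) : Prop :=
  s.PosDef ∧ (∀ X, s.q X ≤ h X) ∧
    ∀ s' : HermForm n, s'.PosDef → (∀ X, s'.q X ≤ h X) →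
      volume s.ball ≤ volume s'.ball

def e0 : Cn 2 := EuclideanSpace.single 0 1
def e1 : Cn 2 := EuclideanSpace.single 1 1

lemma e0_apply (i : Fin 2) : e0 i = if i = 0 then 1 else 0 := by
  simp [e0, EuclideanSpace.single_apply]
lemma e1_apply (i : Fin 2) : e1 i = if i = 1 then 1 else 0 := by
  simp [e1, EuclideanSpace.single_apply]

lemma decomp (X : Cn 2) : X = X 0 • e0 + X 1 • e1 := by
  ext i
  fin_cases i <;>
    simp [e0_apply, e1_apply, PiLp.add_apply, PiLp.smul_apply, smul_eq_mul]

namespace HermForm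
variable (s : HermForm 2)

lemma add_right (X Y Z : Cn 2) : s.s X (Y + Z) = s.s X Y + s.s X Z := by
  rw [s.conj_symm, s.add_left, map_add, ← s.conj_symm, ← s.conj_symm]

lemma smul_right (t : ℂ) (X Y : Cn 2) : s.s X (t • Y) = conj t * s.s X Y := by
  rw [s.conj_symm, s.smul_left, map_mul, ← s.conj_symm]

lemma expand (X : Cn 2) :
    s.s X X = X 0 * conj (X 0) * s.s e0 e0 + X 0 * conj (X 1) * s.s e0 e1
      + X 1 * conj (X 0) * conj (s.s e0 e1) + X 1 * conj (X 1) * s.s e1 e1 := by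
  conv_lhs => rw [decomp X]
  rw [s.add_left, s.add_right, s.add_right, s.smul_left, s.smul_left,
    s.smul_right, s.smul_right, s.smul_right, s.smul_right,
    s.smul_left, s.smul_left, show s.s e1 e0 = conj (s.s e0 e1) from s.conj_symm _ _]
  ring

def fA : ℝ := (s.s e0 e0).re
def fB : ℂ := s.s e0 e1
def fD : ℝ := (s.s e1 e1).re
def fdet : ℝ := s.fA * s.fD - normSq s.fB

lemma diag_real_A : s.s e0 e0 = (s.fA : ℂ) := by
  have h := s.conj_symm e0 e0
  have him : (s.s e0 e0).im = 0 := by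
    have := congrArg Complex.im h
    simp at this; linarith
  exact Complex.ext rfl him
lemma diag_real_D : s.s e1 e1 = (s.fD : ℂ) := by
  have h := s.conj_symm e1 e1
  have him : (s.s e1 e1).im = 0 := by
    have := congrArg Complex.im h
    simp at this; linarith
  exact Complex.ext rfl him

lemma re_expand (X : Cn 2) :
    (s.s X X).re = s.fA * normSq (X 0) + 2 * (X 0 * conj (X 1) * s.fB).re
      + s.fD * normSq (X 1) := by
  rw [s.expand X, s.diag_real_A, s.diag_real_D, show s.s e0 e1 = s.fB from rfl]
  have h3 : X 1 * conj (X 0) * conj s.fB = conj (X 0 * conj (X 1) * s.fB) := by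
    simp only [map_mul, Complex.conj_conj]; ring
  rw [h3]
  simp only [Complex.add_re, Complex.mul_conj, Complex.conj_re, Complex.mul_re,
    Complex.ofReal_re, Complex.ofReal_im, Complex.normSq_apply]
  ring

end HermForm

lemma norm_sq_eq (X : Cn 2) : ‖X‖ ^ 2 = normSq (X 0) + normSq (X 1) := by
  rw [EuclideanSpace.norm_eq, Real.sq_sqrt (by positivity)]
  simp [Fin.sum_univ_two, Complex.sq_norm]

lemma eq_zero_iff (X : Cn 2) : X = 0 ↔ X 0 = 0 ∧ X 1 = 0 := by
  constructor
  · rintro rfl; simp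
  · rintro ⟨h0, h1⟩; ext i; fin_cases i <;> simp [h0, h1]

lemma e0_ne : (e0 : Cn 2) ≠ 0 := by
  simp [eq_zero_iff, e0_apply]
lemma e1_ne : (e1 : Cn 2) ≠ 0 := by
  intro h
  have := (eq_zero_iff e1).1 h
  simp [e1_apply] at this

namespace HermForm
variable (s : HermForm 2)

lemma fA_pos (h : s.PosDef) : 0 < s.fA := h e0 e0_ne
lemma fD_pos (h : s.PosDef) : 0 < s.fD := h e1 e1_ne

lemma fdet_pos (h : s.PosDef) : 0 < s.fdet := by
  have ha := s.fA_pos h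
  set X : Cn 2 := (-(conj s.fB)) • e0 + (s.fA : ℂ) • e1 with hX
  have hX0 : X 0 = -(conj s.fB) := by
    simp [hX, e0_apply, e1_apply, PiLp.add_apply, PiLp.smul_apply, smul_eq_mul]
  have hX1 : X 1 = (s.fA : ℂ) := by
    simp [hX, e0_apply, e1_apply, PiLp.add_apply, PiLp.smul_apply, smul_eq_mul]
  have hXne : X ≠ 0 := by
    intro hc
    rw [eq_zero_iff] at hc
    have h2 : (s.fA : ℂ) = 0 := hX1.symm.trans hc.2
    exact ha.ne' (by exact_mod_cast h2)
  have := h X hXne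
  rw [s.re_expand X, hX0, hX1] at this
  have hre : (-(conj s.fB) * conj ((s.fA : ℂ)) * s.fB).re = -(s.fA * normSq s.fB) := by
    rw [show conj ((s.fA:ℂ)) = (s.fA:ℂ) from Complex.conj_ofReal _]
    simp only [Complex.mul_re, Complex.neg_re, Complex.neg_im, Complex.conj_re,
      Complex.conj_im, Complex.ofReal_re, Complex.ofReal_im, Complex.normSq_apply, Complex.mul_im]
    ring
  rw [hre] at this
  simp only [Complex.normSq_neg, Complex.normSq_conj, Complex.normSq_ofReal] at this
  have h2 : s.fA * (s.fA * s.fD - normSq s.fB) > 0 := by nlinarith [this]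
  unfold fdet
  nlinarith [h2, ha]

end HermForm

/-- standard hermitian form -/
def stdForm : HermForm 2 where
  s := fun X Y => inner ℂ Y X
  add_left := fun X Y Z => inner_add_right _ _ _
  smul_left := fun t X Y => inner_smul_right _ _ _
  conj_symm := fun X Y => (inner_conj_symm X Y).symm
  nonneg := fun X => by simpa using inner_self_nonneg (𝕜 := ℂ) (x := X)

lemma stdForm_apply (X : Cn 2) : (stdForm.s X X).re = ‖X‖ ^ 2 := by
  have := inner_self_eq_norm_sq (𝕜 := ℂ) (x := X)
  simpa [stdForm] using this

lemma stdForm_posdef : stdForm.PosDef := by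
  intro X hX
  rw [stdForm_apply]
  exact pow_pos (norm_pos_iff.2 hX) 2

lemma stdForm_fdet : stdForm.fdet = 1 := by
  have hA : stdForm.fA = 1 := by
    simp [HermForm.fA, stdForm, e0, EuclideanSpace.inner_single_left,
      EuclideanSpace.single_apply]
  have hD : stdForm.fD = 1 := by
    simp [HermForm.fD, stdForm, e1, EuclideanSpace.inner_single_left,
      EuclideanSpace.single_apply]
  have hB : stdForm.fB = 0 := by
    simp [HermForm.fB, stdForm, e0, e1, EuclideanSpace.inner_single_left,
      EuclideanSpace.single_apply]
  simp [HermForm.fdet, hA, hD, hB]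

lemma stdForm_q (X : Cn 2) : stdForm.q X = ‖X‖ := by
  rw [HermForm.q, stdForm_apply, Real.sqrt_sq (norm_nonneg X)]

lemma det4 (a g' x y z w : ℝ) :
    Matrix.det !![a, x, 0, y; 0, g', 0, 0; 0, z, a, w; 0, 0, 0, g'] = a^2*g'^2 := by
  rw [Matrix.det_succ_column_zero]
  simp [Fin.sum_univ_succ, Matrix.det_fin_three]
  ring

def cholMap (α γ : ℝ) (k : ℂ) : Cn 2 →ₗ[ℂ] Cn 2 where
  toFun X := (WithLp.equiv 2 (Fin 2 → ℂ)).symm ![(α:ℂ) * X 0 + k * X 1, (γ:ℂ) * X 1]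
  map_add' X Y := by
    ext i
    fin_cases i <;>
      simp [PiLp.add_apply, WithLp.equiv_symm_apply, PiLp.toLp_apply] <;> ring
  map_smul' c X := by
    ext i
    fin_cases i <;>
      simp [PiLp.smul_apply, WithLp.equiv_symm_apply, PiLp.toLp_apply, smul_eq_mul] <;> ring

lemma cholMap_apply0 (α γ : ℝ) (k : ℂ) (X : Cn 2) :
    cholMap α γ k X 0 = (α:ℂ) * X 0 + k * X 1 := rfl
lemma cholMap_apply1 (α γ : ℝ) (k : ℂ) (X : Cn 2) :
    cholMap α γ k X 1 = (γ:ℂ) * X 1 := rfl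

def rbasis : Module.Basis (Fin 2 × Fin 2) ℝ (Cn 2) :=
  (Complex.basisOneI).smulTower (PiLp.basisFun 2 ℂ (Fin 2))

lemma fpfe0 : (finProdFinEquiv.symm (0:Fin (2*2))).1 = 0 ∧ (finProdFinEquiv.symm (0:Fin (2*2))).2 = 0 := ⟨rfl, rfl⟩
lemma fpfe1 : (finProdFinEquiv.symm (1:Fin (2*2))).1 = 0 ∧ (finProdFinEquiv.symm (1:Fin (2*2))).2 = 1 := ⟨rfl, rfl⟩
lemma fpfe2 : (finProdFinEquiv.symm (2:Fin (2*2))).1 = 1 ∧ (finProdFinEquiv.symm (2:Fin (2*2))).2 = 0 := ⟨rfl, rfl⟩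
lemma fpfe3 : (finProdFinEquiv.symm (3:Fin (2*2))).1 = 1 ∧ (finProdFinEquiv.symm (3:Fin (2*2))).2 = 1 := ⟨rfl, rfl⟩

lemma chol_det (α γ : ℝ) (k : ℂ) :
    LinearMap.det ((cholMap α γ k).restrictScalars ℝ) = α^2 * γ^2 := by
  rw [← LinearMap.det_toMatrix rbasis,
    ← Matrix.det_reindex_self finProdFinEquiv
      (LinearMap.toMatrix rbasis rbasis ((cholMap α γ k).restrictScalars ℝ))]
  have : Matrix.reindex finProdFinEquiv finProdFinEquiv
        (LinearMap.toMatrix rbasis rbasis ((cholMap α γ k).restrictScalars ℝ)) =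
      !![α, k.re, 0, -k.im; 0, γ, 0, 0; 0, k.im, α, k.re; 0, 0, 0, γ] := by
    ext i j
    fin_cases i <;> fin_cases j <;>
      simp [Matrix.reindex_apply, fpfe0.1, fpfe0.2, fpfe1.1, fpfe1.2, fpfe2.1, fpfe2.2,
        fpfe3.1, fpfe3.2, Matrix.vecHead, Matrix.vecTail,
        LinearMap.toMatrix_apply, rbasis,
        Module.Basis.smulTower_repr, Module.Basis.smulTower_apply, PiLp.basisFun_apply,
        PiLp.basisFun_repr, Complex.coe_basisOneI_repr, Complex.coe_basisOneI,
        cholMap_apply0, cholMap_apply1, PiLp.smul_apply, smul_eq_mul,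
        EuclideanSpace.single_apply, WithLp.equiv_symm_apply, PiLp.toLp_apply]
  rw [this]
  exact det4 α γ k.re (-k.im) k.im k.re

namespace HermForm
variable (s : HermForm 2)

def calpha : ℝ := Real.sqrt s.fA
def cgamma : ℝ := Real.sqrt (s.fdet / s.fA)
def ck : ℂ := conj s.fB / (s.calpha : ℂ)

lemma chol_norm (h : s.PosDef) (X : Cn 2) :
    ‖cholMap s.calpha s.cgamma s.ck X‖ ^ 2 = (s.s X X).re := by
  have ha := s.fA_pos h
  have hd := s.fdet_pos h
  have hα : s.calpha > 0 := Real.sqrt_pos.2 ha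
  have hα2 : s.calpha ^ 2 = s.fA := Real.sq_sqrt ha.le
  have hγ2 : s.cgamma ^ 2 = s.fdet / s.fA := Real.sq_sqrt (by positivity)
  rw [norm_sq_eq, cholMap_apply0, cholMap_apply1, s.re_expand X]
  have h1 : normSq ((s.calpha : ℂ) * X 0 + s.ck * X 1)
      = s.fA * normSq (X 0) + 2 * (X 0 * conj (X 1) * s.fB).re
        + normSq s.fB / s.fA * normSq (X 1) := by
    rw [Complex.normSq_add]
    have e1 : normSq ((s.calpha : ℂ) * X 0) = s.fA * normSq (X 0) := by
      rw [Complex.normSq_mul, Complex.normSq_ofReal, ← sq, hα2]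
    have e2 : normSq (s.ck * X 1) = normSq s.fB / s.fA * normSq (X 1) := by
      rw [Complex.normSq_mul, HermForm.ck, Complex.normSq_div, Complex.normSq_conj,
        Complex.normSq_ofReal, ← sq, hα2]
    have e3 : (s.calpha : ℂ) * X 0 * conj (s.ck * X 1) = X 0 * conj (X 1) * s.fB := by
      rw [HermForm.ck]
      have hαc : (s.calpha : ℂ) ≠ 0 := by exact_mod_cast hα.ne'
      rw [map_mul, map_div₀, Complex.conj_conj, Complex.conj_ofReal]
      field_simp
    rw [e1, e2, e3]
    ring
  have h2 : normSq ((s.cgamma : ℂ) * X 1) = s.fdet / s.fA * normSq (X 1) := by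
    rw [Complex.normSq_mul, Complex.normSq_ofReal, ← sq, hγ2]
  rw [h1, h2, HermForm.fdet]
  field_simp
  ring

lemma ball_preimage (h : s.PosDef) :
    s.ball = ((cholMap s.calpha s.cgamma s.ck).restrictScalars ℝ) ⁻¹' Metric.ball 0 1 := by
  ext X
  simp only [HermForm.ball, Set.mem_setOf_eq, Set.mem_preimage,
    LinearMap.coe_restrictScalars, mem_ball_zero_iff]
  rw [← s.chol_norm h X]
  constructor
  · intro hlt
    nlinarith [norm_nonneg (cholMap s.calpha s.cgamma s.ck X)]
  · intro hlt
    nlinarith [norm_nonneg (cholMap s.calpha s.cgamma s.ck X)]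

lemma ball_volume (h : s.PosDef) :
    volume s.ball = ENNReal.ofReal s.fdet⁻¹ * volume (Metric.ball (0 : Cn 2) 1) := by
  have ha := s.fA_pos h
  have hd := s.fdet_pos h
  have hdet : LinearMap.det ((cholMap s.calpha s.cgamma s.ck).restrictScalars ℝ) = s.fdet := by
    rw [chol_det, HermForm.calpha, HermForm.cgamma,
      Real.sq_sqrt ha.le, Real.sq_sqrt (by positivity : (0:ℝ) ≤ s.fdet / s.fA)]
    field_simp
  rw [s.ball_preimage h,
    Measure.addHaar_preimage_linearMap volume (by rw [hdet]; exact hd.ne') _, hdet,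
    abs_of_pos (by positivity)]

end HermForm

lemma det_ge_of_vol (s s' : HermForm 2) (hs : s.PosDef) (hs' : s'.PosDef)
    (hvol : volume s.ball ≤ volume s'.ball) : s'.fdet ≤ s.fdet := by
  have hd := s.fdet_pos hs
  have hd' := s'.fdet_pos hs'
  rw [s.ball_volume hs, s'.ball_volume hs'] at hvol
  have hV0 : volume (Metric.ball (0 : Cn 2) 1) ≠ 0 :=
    (Metric.measure_ball_pos volume 0 one_pos).ne'
  have hVt : volume (Metric.ball (0 : Cn 2) 1) ≠ ⊤ := measure_ball_lt_top.ne
  rw [ENNReal.mul_le_mul_iff_left hV0 hVt] at hvol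
  rw [ENNReal.ofReal_le_ofReal_iff (by positivity)] at hvol
  have h2 := mul_le_mul_of_nonneg_left hvol (le_of_lt (mul_pos hd hd'))
  field_simp at h2
  nlinarith [h2]

def diagForm (p r : ℝ) (hp : 0 < p) (hr : 0 < r) : HermForm 2 where
  s := fun X Y => (p:ℂ) * (X 0 * conj (Y 0)) + (r:ℂ) * (X 1 * conj (Y 1))
  add_left := fun X Y Z => by simp only [PiLp.add_apply]; ring
  smul_left := fun t X Y => by simp only [PiLp.smul_apply, smul_eq_mul]; ring
  conj_symm := fun X Y => by
    simp only [map_add, map_mul, Complex.conj_conj, Complex.conj_ofReal]; ring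
  nonneg := fun X => by
    show 0 ≤ ((p:ℂ) * (X 0 * conj (X 0)) + (r:ℂ) * (X 1 * conj (X 1))).re
    rw [Complex.mul_conj, Complex.mul_conj, ← Complex.ofReal_mul, ← Complex.ofReal_mul,
      ← Complex.ofReal_add, Complex.ofReal_re]
    exact add_nonneg (mul_nonneg hp.le (Complex.normSq_nonneg _))
      (mul_nonneg hr.le (Complex.normSq_nonneg _))

lemma diagForm_re (p r : ℝ) (hp : 0 < p) (hr : 0 < r) (X : Cn 2) :
    ((diagForm p r hp hr).s X X).re = p * normSq (X 0) + r * normSq (X 1) := by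
  show ((p:ℂ) * (X 0 * conj (X 0)) + (r:ℂ) * (X 1 * conj (X 1))).re = _
  rw [Complex.mul_conj, Complex.mul_conj, ← Complex.ofReal_mul, ← Complex.ofReal_mul,
    ← Complex.ofReal_add, Complex.ofReal_re]

lemma diagForm_posdef (p r : ℝ) (hp : 0 < p) (hr : 0 < r) :
    (diagForm p r hp hr).PosDef := by
  intro X hX
  rw [diagForm_re]
  have h0 := Complex.normSq_nonneg (X 0)
  have h1 := Complex.normSq_nonneg (X 1)
  rcases not_and_or.1 (fun hc => hX ((eq_zero_iff X).2 hc)) with hx | hx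
  · nlinarith [Complex.normSq_pos.2 hx]
  · nlinarith [Complex.normSq_pos.2 hx]

lemma diagForm_fdet (p r : ℝ) (hp : 0 < p) (hr : 0 < r) :
    (diagForm p r hp hr).fdet = p * r := by
  have hA : (diagForm p r hp hr).fA = p := by
    simp [HermForm.fA, diagForm, e0_apply, Complex.ofReal_re]
  have hD : (diagForm p r hp hr).fD = r := by
    simp [HermForm.fD, diagForm, e1_apply, Complex.ofReal_re]
  have hB : (diagForm p r hp hr).fB = 0 := by
    simp [HermForm.fB, diagForm, e0_apply, e1_apply]
  simp [HermForm.fdet, hA, hD, hB]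

lemma e0_norm : ‖(e0 : Cn 2)‖ = 1 := by
  rw [e0, EuclideanSpace.norm_single]; norm_num
lemma e1_norm : ‖(e1 : Cn 2)‖ = 1 := by
  rw [e1, EuclideanSpace.norm_single]; norm_num

/-- Main lemma for part 3. -/
lemma lem3 (s : HermForm 2) (hpos : s.PosDef) (hq : ∀ X, s.q X ≤ ‖X‖)
    (hvol : volume s.ball ≤ volume stdForm.ball) : ∀ X, s.q X = ‖X‖ := by
  have hdet : (1:ℝ) ≤ s.fdet := by
    have := det_ge_of_vol s stdForm hpos stdForm_posdef hvol
    rwa [stdForm_fdet] at this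
  have ha0 : 0 ≤ s.fA := s.nonneg e0
  have hd0 : 0 ≤ s.fD := s.nonneg e1
  have ha1 : s.fA ≤ 1 := by
    have h := hq e0
    rw [HermForm.q, e0_norm] at h
    have h2 : Real.sqrt s.fA ≤ 1 := h
    nlinarith [Real.sq_sqrt ha0, Real.sqrt_nonneg s.fA,
      mul_le_mul_of_nonneg_left h2 (Real.sqrt_nonneg s.fA)]
  have hd1 : s.fD ≤ 1 := by
    have h := hq e1
    rw [HermForm.q, e1_norm] at h
    have h2 : Real.sqrt s.fD ≤ 1 := h
    nlinarith [Real.sq_sqrt hd0, Real.sqrt_nonneg s.fD,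
      mul_le_mul_of_nonneg_left h2 (Real.sqrt_nonneg s.fD)]
  have hb : normSq s.fB = 0 := by
    have := Complex.normSq_nonneg s.fB
    have hfd : s.fdet = s.fA * s.fD - normSq s.fB := rfl
    nlinarith
  have hA : s.fA = 1 := by
    have hfd : s.fdet = s.fA * s.fD - normSq s.fB := rfl
    nlinarith
  have hD : s.fD = 1 := by
    have hfd : s.fdet = s.fA * s.fD - normSq s.fB := rfl
    nlinarith
  intro X
  have hb0 : s.fB = 0 := Complex.normSq_eq_zero.1 hb
  rw [HermForm.q, s.re_expand X, hA, hD, hb0]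
  simp only [mul_zero, Complex.zero_re, one_mul, add_zero]
  rw [← norm_sq_eq, Real.sqrt_sq (norm_nonneg X)]

set_option maxHeartbeats 1000000 in
lemma lem4 (ε : ℝ) (hε : 0 < ε) (hε2 : ε < 1 / Real.sqrt 2) (s : HermForm 2)
    (hpos : s.PosDef) (hq : ∀ X, s.q X ≤ max ‖X‖ (‖X 0‖ / ε))
    (hmin : ∀ s' : HermForm 2, s'.PosDef →
      (∀ X, s'.q X ≤ max ‖X‖ (‖X 0‖ / ε)) →
      volume s.ball ≤ volume s'.ball) :
    s.q e1 < 1 := by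
  have hε2sq : 0 < ε ^ 2 := by positivity
  have hsqrt2 : (1 / Real.sqrt 2) ^ 2 = 1 / 2 := by
    rw [div_pow, one_pow, Real.sq_sqrt (by norm_num : (0:ℝ) ≤ 2)]
  have hhalf : ε ^ 2 < 1 / 2 := by
    have h2 : 0 < 1 / Real.sqrt 2 := by positivity
    nlinarith [hε2, hε, h2]
  set c : ℝ := 1 / ε ^ 2 - 1 with hc_def
  clear_value c
  have hc : 1 < c := by
    have h3 : 2 < 1 / ε ^ 2 := by
      rw [lt_div_iff₀ hε2sq]; nlinarith
    simp only [hc_def]; linarith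
  have hc0 : 0 < c := by linarith
  have hinv : 1 / ε ^ 2 = 1 + c := by simp [hc_def]
  -- d ≤ 1
  have he10 : (e1 : Cn 2) 0 = 0 := by simp [e1_apply]
  have hd0 : 0 ≤ s.fD := s.nonneg e1
  have hd1 : s.fD ≤ 1 := by
    have h := hq e1
    rw [HermForm.q, e1_norm, he10] at h
    simp only [norm_zero, zero_div, max_eq_left (by norm_num : (0:ℝ) ≤ 1)] at h
    have h2 : Real.sqrt s.fD ≤ 1 := h
    nlinarith [Real.sq_sqrt hd0, Real.sqrt_nonneg s.fD,
      mul_le_mul_of_nonneg_left h2 (Real.sqrt_nonneg s.fD)]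
  by_contra hcon
  have hD1 : s.fD = 1 := by
    have h1 : (1:ℝ) ≤ Real.sqrt s.fD := not_lt.1 hcon
    have h2 : (1:ℝ) ≤ s.fD := by nlinarith [Real.sq_sqrt hd0]
    linarith
  -- the critical direction w
  set u : ℂ := if s.fB = 0 then 1 else s.fB / (‖s.fB‖ : ℂ) with hu_def
  clear_value u
  set x₁ : ℂ := (Real.sqrt c : ℂ) * u with hx1_def
  clear_value x₁
  set w : Cn 2 := e0 + x₁ • e1 with hw_def
  clear_value w
  have hw0 : w 0 = 1 := by
    simp [hw_def, e0_apply, e1_apply, PiLp.add_apply, PiLp.smul_apply, smul_eq_mul]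
  have hw1 : w 1 = x₁ := by
    simp [hw_def, e0_apply, e1_apply, PiLp.add_apply, PiLp.smul_apply, smul_eq_mul]
  have hnu : normSq u = 1 := by
    rw [hu_def]
    split_ifs with h0
    · simp
    · have habs : ‖s.fB‖ ≠ 0 := by rwa [ne_eq, norm_eq_zero]
      rw [Complex.normSq_div, Complex.normSq_ofReal, ← Complex.sq_norm, pow_two]
      exact div_self (mul_ne_zero habs habs)
  have hnx : normSq x₁ = c := by
    rw [hx1_def, Complex.normSq_mul, Complex.normSq_ofReal, hnu,
      Real.mul_self_sqrt hc0.le, mul_one]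
  have hcross : (w 0 * conj (w 1) * s.fB).re = Real.sqrt c * ‖s.fB‖ := by
    rw [hw0, hw1, one_mul, hx1_def, map_mul, Complex.conj_ofReal]
    by_cases h0 : s.fB = 0
    · simp [h0]
    · have habs : ‖s.fB‖ ≠ 0 := by rwa [ne_eq, norm_eq_zero]
      have habsC : ((‖s.fB‖ : ℝ) : ℂ) ≠ 0 := by exact_mod_cast habs
      have hcu : conj u * s.fB = ((‖s.fB‖ : ℝ) : ℂ) := by
        rw [hu_def, if_neg h0, map_div₀, Complex.conj_ofReal, div_mul_eq_mul_div,
          mul_comm, Complex.mul_conj, Complex.normSq_eq_norm_sq]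
        rw [pow_two, Complex.ofReal_mul, mul_div_assoc, div_self habsC, mul_one]
      rw [mul_assoc, hcu, ← Complex.ofReal_mul, Complex.ofReal_re]
  -- constraint at w
  have hww : (s.s w w).re ≤ 1 + c := by
    have h := hq w
    have hwnorm : ‖w‖ = 1 / ε := by
      have h2 : ‖w‖ ^ 2 = (1/ε) ^ 2 := by
        rw [norm_sq_eq, hw0, hw1, hnx]
        simp only [Complex.normSq_one]
        rw [div_pow, one_pow, ← hinv]
      have h3 := congrArg Real.sqrt h2
      rwa [Real.sqrt_sq (norm_nonneg w), Real.sqrt_sq (by positivity)] at h3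
    rw [HermForm.q, hwnorm, hw0, norm_one, max_self] at h
    have h4 : (s.s w w).re ≤ (1/ε)^2 := by
      nlinarith [Real.sq_sqrt (s.nonneg w), Real.sqrt_nonneg (s.s w w).re, h,
        (by positivity : (0:ℝ) < 1/ε)]
    rw [div_pow, one_pow, hinv] at h4
    exact h4
  have key : s.fA + 2 * (Real.sqrt c * ‖s.fB‖) + c ≤ 1 + c := by
    have := hww
    rw [s.re_expand w, hw0, hw1, hD1] at this
    simp only [Complex.normSq_one, mul_one] at this
    rw [hnx] at this
    have h5 : (w 0 * conj (w 1) * s.fB).re = ((1:ℂ) * conj x₁ * s.fB).re := by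
      rw [hw0, hw1]
    rw [← h5, hcross] at this
    linarith [this]
  have ha1 : s.fA ≤ 1 := by
    nlinarith [Real.sqrt_nonneg c, norm_nonneg s.fB]
  have hdet1 : s.fdet ≤ 1 := by
    have hfd : s.fdet = s.fA * s.fD - normSq s.fB := rfl
    nlinarith [Complex.normSq_nonneg s.fB]
  -- the competitor
  set p : ℝ := (1 + c) / 2 with hp_def
  clear_value p
  set r : ℝ := (1 + c) / (2 * c) with hr_def
  clear_value r
  have hp : 0 < p := by rw [hp_def]; positivity
  have hr : 0 < r := by rw [hr_def]; positivity
  have hq' : ∀ X, (diagForm p r hp hr).q X ≤ max ‖X‖ (‖X 0‖ / ε) := by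
    intro X
    rw [HermForm.q, diagForm_re]
    have ht0 := Complex.normSq_nonneg (X 0)
    have hu0 := Complex.normSq_nonneg (X 1)
    have habs0 : ‖X 0‖ = Real.sqrt (normSq (X 0)) := Complex.norm_def _
    have hnormX : ‖X‖ = Real.sqrt (normSq (X 0) + normSq (X 1)) := by
      have := norm_sq_eq X
      have h3 := congrArg Real.sqrt this
      rwa [Real.sqrt_sq (norm_nonneg X)] at h3
    have hsq1c : Real.sqrt (1 + c) = 1 / ε := by
      have h1c : (1:ℝ) + c = (1/ε)^2 := by
        rw [div_pow, one_pow]; linarith [hinv]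
      rw [h1c, Real.sqrt_sq (by positivity : (0:ℝ) ≤ 1/ε)]
    rcases le_total (normSq (X 1)) (c * normSq (X 0)) with h | h
    · refine le_trans ?_ (le_max_right _ _)
      have hb : p * normSq (X 0) + r * normSq (X 1) ≤ (1 + c) * normSq (X 0) := by
        rw [hp_def, hr_def]
        have hrc : (1 + c) / (2 * c) * (c * normSq (X 0))
            = (1 + c) / 2 * normSq (X 0) := by field_simp
        nlinarith [mul_le_mul_of_nonneg_left h (le_of_lt hr), hrc]
      refine le_trans (Real.sqrt_le_sqrt hb) ?_
      rw [Real.sqrt_mul (by linarith) _, hsq1c, habs0]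
      exact le_of_eq (by ring)
    · refine le_trans ?_ (le_max_left _ _)
      have hb : p * normSq (X 0) + r * normSq (X 1)
          ≤ normSq (X 0) + normSq (X 1) := by
        rw [hp_def, hr_def]
        have e1 : ((1+c)/2 - 1) = (c-1)/2 := by ring
        have e2 : (1 - (1+c)/(2*c)) * (c * normSq (X 0)) ≤ (1 - (1+c)/(2*c)) * normSq (X 1) := by
          apply mul_le_mul_of_nonneg_left h
          rw [sub_nonneg, div_le_one (by linarith)]
          linarith
        have e3 : (1 - (1+c)/(2*c)) * c = (c-1)/2 := by field_simp; ring
        nlinarith [e2, e3]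
      refine le_trans (Real.sqrt_le_sqrt hb) ?_
      rw [hnormX]
  have hge := det_ge_of_vol s (diagForm p r hp hr) hpos (diagForm_posdef p r hp hr)
    (hmin _ (diagForm_posdef p r hp hr) hq')
  rw [diagForm_fdet] at hge
  have hpr : 1 < p * r := by
    have hpr2 : p * r = (1+c)^2 / (4*c) := by rw [hp_def, hr_def]; field_simp; ring
    rw [hpr2, lt_div_iff₀ (by positivity)]
    nlinarith [sq_nonneg (c-1)]
  linarith

set_option maxHeartbeats 1000000 in
theorem stmt13 (ε : ℝ) (hε : 0 < ε) (hε2 : ε < 1 / Real.sqrt 2)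
    (η : Cn 2 → Cn 2 → ℝ)
    (hdef : ∀ z X, η z X = if z = 0 then max ‖X‖ (‖X 0‖ / ε) else ‖X‖)
    (sel : Cn 2 → HermForm 2)
    (hsel : ∀ z, IsMinimalProd (η z) (sel z)) :
    UpperSemicontinuousOn (fun p : Cn 2 × Cn 2 => η p.1 p.2)
      (Metric.ball 0 1 ×ˢ Set.univ) ∧
    (∀ z, IsCNorm (η z)) ∧
    (∀ z, z ≠ 0 → ∀ X, Real.sqrt 2 * (sel z).q X = Real.sqrt 2 * ‖X‖) ∧
    Real.sqrt 2 * (sel 0).q (EuclideanSpace.single 1 1) < Real.sqrt 2 ∧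
    ¬ UpperSemicontinuousWithinAt
        (fun p : Cn 2 × Cn 2 => Real.sqrt 2 * (sel p.1).q p.2)
        (Metric.ball 0 1 ×ˢ Set.univ) (0, EuclideanSpace.single 1 1) := by
  have hS2 : ∀ z : Cn 2, z ≠ 0 → ∀ X, η z X = ‖X‖ := fun z hz X => by
    rw [hdef, if_neg hz]
  have hsqrt2pos : (0:ℝ) < Real.sqrt 2 := Real.sqrt_pos.2 (by norm_num)
  -- part 3 core
  have part3 : ∀ z : Cn 2, z ≠ 0 → ∀ X, (sel z).q X = ‖X‖ := by
    intro z hz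
    obtain ⟨hpos, hq, hmin⟩ := hsel z
    refine lem3 (sel z) hpos (fun X => by rw [← hS2 z hz X]; exact hq X) ?_
    exact hmin stdForm stdForm_posdef (fun X => by rw [hS2 z hz X, stdForm_q])
  -- part 4 core
  have part4 : (sel 0).q e1 < 1 := by
    obtain ⟨hpos, hq, hmin⟩ := hsel 0
    have hη0 : ∀ X : Cn 2, η 0 X = max ‖X‖ (‖X 0‖ / ε) := fun X => by
      rw [hdef, if_pos rfl]
    exact lem4 ε hε hε2 (sel 0) hpos (fun X => by rw [← hη0]; exact hq X)
      (fun s' h1 h2 => hmin s' h1 (fun X => by rw [hη0]; exact h2 X))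
  have part4' : Real.sqrt 2 * (sel 0).q e1 < Real.sqrt 2 := by nlinarith [part4]
  refine ⟨?_, ?_, ?_, part4', ?_⟩
  · -- upper semicontinuity of η
    intro p _ y hy
    by_cases h1 : p.1 = 0
    · have hcont : Continuous fun q : Cn 2 × Cn 2 =>
          max ‖q.2‖ (‖q.2 0‖ / ε) := by
        apply Continuous.max
        · exact continuous_norm.comp continuous_snd
        · exact (continuous_norm.comp
            ((EuclideanSpace.proj (0 : Fin 2)).continuous.comp continuous_snd)).div_const ε
      have hle : ∀ q : Cn 2 × Cn 2, η q.1 q.2 ≤ max ‖q.2‖ (‖q.2 0‖ / ε) := by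
        intro q; rw [hdef]; split_ifs
        · exact le_rfl
        · exact le_max_left _ _
      have hpy : max ‖p.2‖ (‖p.2 0‖ / ε) < y := by
        have hy' : η p.1 p.2 < y := hy
        rw [hdef, if_pos h1] at hy'; exact hy'
      have hev : ∀ᶠ q in nhds p, max ‖q.2‖ (‖q.2 0‖ / ε) < y :=
        hcont.continuousAt.eventually_lt continuousAt_const hpy
      exact (hev.filter_mono nhdsWithin_le_nhds).mono
        (fun q hq => lt_of_le_of_lt (hle q) hq)
    · have hopen : IsOpen {q : Cn 2 × Cn 2 | q.1 ≠ 0 ∧ ‖q.2‖ < y} :=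
        IsOpen.and (isOpen_compl_singleton.preimage continuous_fst)
          (isOpen_lt (continuous_norm.comp continuous_snd) continuous_const)
      have hmem : p ∈ {q : Cn 2 × Cn 2 | q.1 ≠ 0 ∧ ‖q.2‖ < y} := by
        refine ⟨h1, ?_⟩
        have hy' : η p.1 p.2 < y := hy
        rw [hdef, if_neg h1] at hy'; exact hy'
      have hev : ∀ᶠ q in nhds p, q.1 ≠ 0 ∧ ‖q.2‖ < y := hopen.mem_nhds hmem
      exact (hev.filter_mono nhdsWithin_le_nhds).mono
        (fun q hq => by show η q.1 q.2 < y; rw [hdef, if_neg hq.1]; exact hq.2)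
  · -- η z is a norm
    intro z
    refine ⟨⟨?_, ?_, ?_⟩, ?_⟩
    · intro X; rw [hdef]; split_ifs
      · exact le_trans (norm_nonneg X) (le_max_left _ _)
      · exact norm_nonneg X
    · intro X Y; rw [hdef, hdef, hdef]; split_ifs
      · apply max_le
        · exact le_trans (norm_add_le X Y)
            (add_le_add (le_max_left _ _) (le_max_left _ _))
        · have h2 : (X + Y) 0 = X 0 + Y 0 := rfl
          rw [h2]
          calc ‖X 0 + Y 0‖ / ε
              ≤ (‖X 0‖ + ‖Y 0‖) / ε :=
                (div_le_div_iff_of_pos_right hε).2 (norm_add_le _ _)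
            _ = ‖X 0‖ / ε + ‖Y 0‖ / ε := add_div _ _ _
            _ ≤ _ := add_le_add (le_max_right _ _) (le_max_right _ _)
      · exact norm_add_le X Y
    · intro t X; rw [hdef, hdef]; split_ifs
      · have h2 : (t • X) 0 = t * X 0 := rfl
        rw [h2, norm_smul, norm_mul, mul_div_assoc]
        exact (mul_max_of_nonneg _ _ (norm_nonneg t)).symm
      · rw [norm_smul]
    · intro X hX
      have hn : ‖X‖ ≤ 0 := by
        rw [hdef] at hX
        split_ifs at hX
        · calc ‖X‖ ≤ max ‖X‖ (‖X 0‖ / ε) := le_max_left _ _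
            _ = 0 := hX
        · exact le_of_eq hX
      exact norm_eq_zero.1 (le_antisymm hn (norm_nonneg X))
  · intro z hz X; rw [part3 z hz X]
  · -- failure of usc for the Wu metric
    intro H
    have hev := H (Real.sqrt 2) part4'
    have hne : ∀ n : ℕ, ((Complex.ofReal (((n:ℝ)+2)⁻¹)) • e0 : Cn 2) ≠ 0 := by
      intro n
      refine smul_ne_zero ?_ e0_ne
      have : ((n:ℝ)+2)⁻¹ ≠ 0 := by positivity
      exact_mod_cast Complex.ofReal_ne_zero.2 this
    have htend : Filter.Tendsto (fun n : ℕ => (((Complex.ofReal (((n:ℝ)+2)⁻¹)) • e0, e1) : Cn 2 × Cn 2))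
        Filter.atTop (nhdsWithin (0, e1) (Metric.ball 0 1 ×ˢ Set.univ)) := by
      apply tendsto_nhdsWithin_of_tendsto_nhds_of_eventually_within
      · refine Filter.Tendsto.prodMk_nhds ?_ tendsto_const_nhds
        have h1 : Filter.Tendsto (fun n : ℕ => ((n:ℝ)+2)⁻¹) Filter.atTop (nhds 0) :=
          tendsto_inv_atTop_zero.comp
            (Filter.tendsto_atTop_add_const_right _ 2 tendsto_natCast_atTop_atTop)
        have h2 : Filter.Tendsto (fun n : ℕ => ((((n:ℝ)+2)⁻¹ : ℝ) : ℂ)) Filter.atTop (nhds 0) := by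
          rw [show ((0:ℂ)) = ((0:ℝ):ℂ) by norm_num]
          exact (Complex.continuous_ofReal.tendsto 0).comp h1
        have h3 := h2.smul_const (e0 : Cn 2)
        rwa [zero_smul] at h3
      · apply Filter.Eventually.of_forall
        intro n
        refine Set.mk_mem_prod ?_ (Set.mem_univ _)
        rw [mem_ball_zero_iff, norm_smul, e0_norm, mul_one]
        have h4 : ‖((((n:ℝ)+2)⁻¹ : ℝ) : ℂ)‖ = |((n:ℝ)+2)⁻¹| := Complex.norm_real _
        rw [h4, abs_of_pos (by positivity)]
        rw [inv_lt_one_iff₀]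
        right
        have := Nat.cast_nonneg (α := ℝ) n
        linarith
    have hev2 := htend.eventually hev
    obtain ⟨n, hn⟩ := hev2.exists
    have heq : Real.sqrt 2 * (sel ((Complex.ofReal (((n:ℝ)+2)⁻¹)) • e0 : Cn 2)).q e1 = Real.sqrt 2 := by
      rw [part3 _ (hne n) e1, e1_norm, mul_one]
    have hn' : Real.sqrt 2 * (sel ((Complex.ofReal (((n:ℝ)+2)⁻¹)) • e0 : Cn 2)).q e1
        < Real.sqrt 2 := hn
    rw [heq] at hn'
    exact lt_irrefl _ hn'
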